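/- Let κ > 0. For t > 0 define h(t,r) = (2πt)^{-3/2} e^{-r²/(2t)} · (κr/sinh(κr)) · e^{-κ²t/2} for r > 0, ξ(t) = √(2/π)·κ^{-1}·t^{-3/2}·e^{-κ²t/2}, and η(t) = ∫₀^∞ e^{-r²/(2t)} r sinh(κr) log(sinh(κr)/(κr)) dr. Then for every t > 0, the entropy E(t) := -(4π/κ²)·∫₀^∞ h(t,r)·log h(t,r)·sinh²(κr) dr satisfies E(t) = (3/2)·log(2πt) + κ²t/2 + (κ²t + 3)/2 + ξ(t)·η(t). -/

import Mathlib

open Real MeasureTheory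

/-- Heat kernel of 3-dimensional hyperbolic space of curvature `-κ²`,
as a function of time `t` and distance `r`. -/
noncomputable def hypHeatKernel (κ t r : ℝ) : ℝ :=
  (2 * π * t) ^ (-(3 : ℝ) / 2) * Real.exp (-r ^ 2 / (2 * t)) *
    (κ * r / Real.sinh (κ * r)) * Real.exp (-κ ^ 2 * t / 2)

/-- Entropy `-∫ h log h dVol` of the heat kernel of `ℍ³`, written as a
one-dimensional integral in polar coordinates (volume element `4π sinh²(κr)/κ² dr`). -/
noncomputable def hypEntropy (κ t : ℝ) : ℝ :=
  -(4 * π / κ ^ 2) * ∫ r in Set.Ioi (0 : ℝ),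
    hypHeatKernel κ t r * Real.log (hypHeatKernel κ t r) * (Real.sinh (κ * r)) ^ 2

/-- `ξ(t) = √(2/π) κ⁻¹ t^{-3/2} e^{-κ²t/2}`. -/
noncomputable def xiFun (κ t : ℝ) : ℝ :=
  Real.sqrt (2 / π) * κ⁻¹ * t ^ (-(3 : ℝ) / 2) * Real.exp (-κ ^ 2 * t / 2)

/-- `η(t) = ∫₀^∞ e^{-r²/(2t)} r sinh(κr) log(sinh(κr)/(κr)) dr`. -/
noncomputable def etaFun (κ t : ℝ) : ℝ :=
  ∫ r in Set.Ioi (0 : ℝ),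
    Real.exp (-r ^ 2 / (2 * t)) * r * Real.sinh (κ * r) *
      Real.log (Real.sinh (κ * r) / (κ * r))

open Set

/-- integrability of `x^k e^{-bx²}` on ℝ -/
lemma integrable_pow_gauss {b : ℝ} (hb : 0 < b) (k : ℕ) :
    Integrable (fun x : ℝ => x ^ k * Real.exp (-b * x ^ 2)) := by
  have h := integrable_rpow_mul_exp_neg_mul_sq hb (s := (k : ℝ))
    (lt_of_lt_of_le (by norm_num) (Nat.cast_nonneg k))
  simpa [Real.rpow_natCast] using h

lemma odd_gauss {b : ℝ} (hb : 0 < b) (k : ℕ) (hk : Odd k) :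
    ∫ x : ℝ, x ^ k * Real.exp (-b * x ^ 2) = 0 := by
  have h := integral_neg_eq_self (fun x : ℝ => x ^ k * Real.exp (-b * x ^ 2)) volume
  have h2 : (∫ x : ℝ, (-x) ^ k * Real.exp (-b * (-x) ^ 2))
      = - ∫ x : ℝ, x ^ k * Real.exp (-b * x ^ 2) := by
    rw [← integral_neg]
    congr 1; funext x
    rw [hk.neg_pow, neg_sq]; ring
  rw [h2] at h
  linarith

lemma moment2_gauss {b : ℝ} (hb : 0 < b) :
    ∫ x : ℝ, x ^ 2 * Real.exp (-b * x ^ 2) = Real.sqrt (π / b) / (2 * b) := by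
  have hderiv : ∀ x : ℝ, HasDerivAt (fun x : ℝ => x * Real.exp (-b * x ^ 2))
      (Real.exp (-b * x ^ 2) - 2 * b * (x ^ 2 * Real.exp (-b * x ^ 2))) x := by
    intro x
    have h1 : HasDerivAt (fun x : ℝ => -b * x ^ 2) (-b * (2 * x ^ 1)) x :=
      (hasDerivAt_pow 2 x).const_mul (-b)
    have h2 := h1.exp
    have h3 := (hasDerivAt_id x).mul h2
    refine h3.congr_deriv ?_
    simp [pow_one]; ring
  have hint : Integrable (fun x : ℝ =>
      Real.exp (-b * x ^ 2) - 2 * b * (x ^ 2 * Real.exp (-b * x ^ 2))) :=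
    (integrable_exp_neg_mul_sq hb).sub ((integrable_pow_gauss hb 2).const_mul _)
  have hf : Integrable (fun x : ℝ => x * Real.exp (-b * x ^ 2)) :=
    integrable_mul_exp_neg_mul_sq hb
  have h0 := integral_eq_zero_of_hasDerivAt_of_integrable hderiv hint hf
  rw [integral_sub (integrable_exp_neg_mul_sq hb)
    ((integrable_pow_gauss hb 2).const_mul _), integral_const_mul, integral_gaussian] at h0
  have : (2 * b) * ∫ x : ℝ, x ^ 2 * Real.exp (-b * x ^ 2) = Real.sqrt (π / b) := by linarith
  field_simp at this ⊢
  linarith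

lemma exp_quad_eq {b : ℝ} (hb : 0 < b) (c x : ℝ) :
    Real.exp (-b * x ^ 2 + c * x)
      = Real.exp (c ^ 2 / (4 * b)) * Real.exp (-b * (x - c / (2 * b)) ^ 2) := by
  rw [← Real.exp_add]; congr 1; field_simp; ring

lemma shift_pow_gauss {b : ℝ} (hb : 0 < b) (μ : ℝ) (k : ℕ) :
    ∫ x : ℝ, x ^ k * Real.exp (-b * (x - μ) ^ 2)
      = ∫ y : ℝ, (y + μ) ^ k * Real.exp (-b * y ^ 2) := by
  have h := integral_add_right_eq_self
    (μ := volume) (fun x : ℝ => x ^ k * Real.exp (-b * (x - μ) ^ 2)) μ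
  rw [← h]
  congr 1; funext x; rw [add_sub_cancel_right]

lemma integrable_shift_pow_gauss {b : ℝ} (hb : 0 < b) (μ : ℝ) (k : ℕ) :
    Integrable (fun x : ℝ => x ^ k * Real.exp (-b * (x - μ) ^ 2)) := by
  have h : Integrable (fun y : ℝ => (y + μ) ^ k * Real.exp (-b * y ^ 2)) := by
    have : (fun y : ℝ => (y + μ) ^ k * Real.exp (-b * y ^ 2))
        = fun y : ℝ => ∑ i ∈ Finset.range (k + 1),
            (μ ^ (k - i) * (k.choose i : ℝ)) * (y ^ i * Real.exp (-b * y ^ 2)) := by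
      funext y
      rw [add_pow, Finset.sum_mul]
      congr 1; funext i; ring
    rw [this]
    exact integrable_finset_sum _ fun i _ => (integrable_pow_gauss hb i).const_mul _
  have h2 := h.comp_sub_right μ
  simpa using h2

lemma pow1_shift_gauss {b : ℝ} (hb : 0 < b) (μ : ℝ) :
    ∫ x : ℝ, x * Real.exp (-b * (x - μ) ^ 2) = μ * Real.sqrt (π / b) := by
  have h := shift_pow_gauss hb μ 1
  simp only [pow_one] at h
  rw [h]
  have : (fun y : ℝ => (y + μ) * Real.exp (-b * y ^ 2))
      = fun y : ℝ => y * Real.exp (-b * y ^ 2) + μ * Real.exp (-b * y ^ 2) := by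
    funext y; ring
  rw [this, integral_add (integrable_mul_exp_neg_mul_sq hb)
    ((integrable_exp_neg_mul_sq hb).const_mul μ), integral_const_mul, integral_gaussian]
  have ho := odd_gauss hb 1 ⟨0, by norm_num⟩
  simp only [pow_one] at ho
  rw [ho, zero_add]

lemma pow3_shift_gauss {b : ℝ} (hb : 0 < b) (μ : ℝ) :
    ∫ x : ℝ, x ^ 3 * Real.exp (-b * (x - μ) ^ 2)
      = (μ ^ 3 + 3 * μ / (2 * b)) * Real.sqrt (π / b) := by
  rw [shift_pow_gauss hb μ 3]
  have : (fun y : ℝ => (y + μ) ^ 3 * Real.exp (-b * y ^ 2))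
      = fun y : ℝ => y ^ 3 * Real.exp (-b * y ^ 2)
          + ((3 * μ) * (y ^ 2 * Real.exp (-b * y ^ 2))
          + ((3 * μ ^ 2) * (y * Real.exp (-b * y ^ 2))
          + μ ^ 3 * Real.exp (-b * y ^ 2))) := by
    funext y; ring
  have i3 := integrable_pow_gauss hb 3
  have i2 := (integrable_pow_gauss hb 2).const_mul (3 * μ)
  have i1 := (integrable_mul_exp_neg_mul_sq hb).const_mul (3 * μ ^ 2)
  have i0 := (integrable_exp_neg_mul_sq hb).const_mul (μ ^ 3)
  have i10 : Integrable (fun y : ℝ => (3 * μ ^ 2) * (y * Real.exp (-b * y ^ 2))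
      + μ ^ 3 * Real.exp (-b * y ^ 2)) := i1.add i0
  have i210 : Integrable (fun y : ℝ => (3 * μ) * (y ^ 2 * Real.exp (-b * y ^ 2))
      + ((3 * μ ^ 2) * (y * Real.exp (-b * y ^ 2)) + μ ^ 3 * Real.exp (-b * y ^ 2))) :=
    i2.add i10
  rw [this, integral_add i3 i210, integral_add i2 i10, integral_add i1 i0, integral_const_mul, integral_const_mul, integral_const_mul,
    odd_gauss hb 3 ⟨1, by norm_num⟩, moment2_gauss hb, integral_gaussian]
  have ho := odd_gauss hb 1 ⟨0, by norm_num⟩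
  simp only [pow_one] at ho
  rw [ho]
  field_simp
  ring

lemma integrable_pow_quad {b : ℝ} (hb : 0 < b) (c : ℝ) (k : ℕ) :
    Integrable (fun x : ℝ => x ^ k * Real.exp (-b * x ^ 2 + c * x)) := by
  have : (fun x : ℝ => x ^ k * Real.exp (-b * x ^ 2 + c * x))
      = fun x : ℝ => Real.exp (c ^ 2 / (4 * b))
          * (x ^ k * Real.exp (-b * (x - c / (2 * b)) ^ 2)) := by
    funext x; rw [exp_quad_eq hb c x]; ring
  rw [this]
  exact (integrable_shift_pow_gauss hb _ k).const_mul _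

lemma pow1_quad {b : ℝ} (hb : 0 < b) (c : ℝ) :
    ∫ x : ℝ, x * Real.exp (-b * x ^ 2 + c * x)
      = Real.exp (c ^ 2 / (4 * b)) * (c / (2 * b)) * Real.sqrt (π / b) := by
  have : (fun x : ℝ => x * Real.exp (-b * x ^ 2 + c * x))
      = fun x : ℝ => Real.exp (c ^ 2 / (4 * b))
          * (x * Real.exp (-b * (x - c / (2 * b)) ^ 2)) := by
    funext x; rw [exp_quad_eq hb c x]; ring
  rw [this, integral_const_mul, pow1_shift_gauss hb]
  ring

lemma pow3_quad {b : ℝ} (hb : 0 < b) (c : ℝ) :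
    ∫ x : ℝ, x ^ 3 * Real.exp (-b * x ^ 2 + c * x)
      = Real.exp (c ^ 2 / (4 * b)) * ((c / (2 * b)) ^ 3 + 3 * (c / (2 * b)) / (2 * b))
          * Real.sqrt (π / b) := by
  have : (fun x : ℝ => x ^ 3 * Real.exp (-b * x ^ 2 + c * x))
      = fun x : ℝ => Real.exp (c ^ 2 / (4 * b))
          * (x ^ 3 * Real.exp (-b * (x - c / (2 * b)) ^ 2)) := by
    funext x; rw [exp_quad_eq hb c x]; ring
  rw [this, integral_const_mul, pow3_shift_gauss hb]
  ring

lemma J1val {κ t : ℝ} (hκ : 0 < κ) (ht : 0 < t) :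
    ∫ r in Ioi (0 : ℝ), Real.exp (-r ^ 2 / (2 * t)) * r * Real.sinh (κ * r)
      = Real.sqrt (2 * π * t) * κ * t * Real.exp (κ ^ 2 * t / 2) / 2 := by
  have hb : (0 : ℝ) < (2 * t)⁻¹ := by positivity
  set F : ℝ → ℝ := fun x => Real.exp (-x ^ 2 / (2 * t)) * x * Real.sinh (κ * x) with hF
  have hneg : ∀ x : ℝ, F (-x) = F x := by
    intro x
    simp only [hF, mul_neg, Real.sinh_neg, neg_sq, neg_mul, neg_neg]
  have heven : ∀ x : ℝ, F |x| = F x := by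
    intro x
    rcases le_or_gt 0 x with h | h
    · rw [abs_of_nonneg h]
    · rw [abs_of_neg h, hneg]
  have habs := integral_comp_abs (f := F)
  have hL : (∫ x : ℝ, F |x|) = ∫ x : ℝ, F x := by
    congr 1; funext x; exact heven x
  rw [hL] at habs
  have hFx : ∀ x : ℝ, F x = (1 / 2) * (x * Real.exp (-(2 * t)⁻¹ * x ^ 2 + κ * x))
      - (1 / 2) * (x * Real.exp (-(2 * t)⁻¹ * x ^ 2 + (-κ) * x)) := by
    intro x
    have e1 : Real.exp (-(2 * t)⁻¹ * x ^ 2 + κ * x)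
        = Real.exp (-x ^ 2 / (2 * t)) * Real.exp (κ * x) := by
      rw [← Real.exp_add]; congr 1; ring
    have e2 : Real.exp (-(2 * t)⁻¹ * x ^ 2 + (-κ) * x)
        = Real.exp (-x ^ 2 / (2 * t)) * Real.exp (-(κ * x)) := by
      rw [← Real.exp_add]; congr 1; ring
    rw [e1, e2, hF]
    simp only [Real.sinh_eq]
    ring
  have i1 : Integrable (fun x : ℝ => x * Real.exp (-(2 * t)⁻¹ * x ^ 2 + κ * x)) := by
    simpa [pow_one] using integrable_pow_quad hb κ 1
  have i2 : Integrable (fun x : ℝ => x * Real.exp (-(2 * t)⁻¹ * x ^ 2 + (-κ) * x)) := by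
    simpa [pow_one] using integrable_pow_quad hb (-κ) 1
  have hIR : (∫ x : ℝ, F x)
      = (1 / 2) * (∫ x : ℝ, x * Real.exp (-(2 * t)⁻¹ * x ^ 2 + κ * x))
        - (1 / 2) * (∫ x : ℝ, x * Real.exp (-(2 * t)⁻¹ * x ^ 2 + (-κ) * x)) := by
    rw [show F = fun x : ℝ => (1 / 2) * (x * Real.exp (-(2 * t)⁻¹ * x ^ 2 + κ * x))
      - (1 / 2) * (x * Real.exp (-(2 * t)⁻¹ * x ^ 2 + (-κ) * x)) from funext hFx]
    rw [integral_sub (i1.const_mul _) (i2.const_mul _), integral_const_mul, integral_const_mul]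
  have hq1 := pow1_quad hb κ
  have hq2 := pow1_quad hb (-κ)
  have hsq : Real.sqrt (π / (2 * t)⁻¹) = Real.sqrt (2 * π * t) := by
    congr 1; field_simp
  have hc1 : κ ^ 2 / (4 * (2 * t)⁻¹) = κ ^ 2 * t / 2 := by field_simp; ring
  have hc2 : (-κ) ^ 2 / (4 * (2 * t)⁻¹) = κ ^ 2 * t / 2 := by field_simp; ring
  have hμ : κ / (2 * (2 * t)⁻¹) = κ * t := by field_simp
  have hμ' : (-κ) / (2 * (2 * t)⁻¹) = -(κ * t) := by field_simp
  rw [hq1, hq2, hsq, hc1, hc2, hμ, hμ'] at hIR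
  have : (2 : ℝ) * ∫ x in Ioi (0 : ℝ), F x
      = Real.sqrt (2 * π * t) * κ * t * Real.exp (κ ^ 2 * t / 2) := by
    rw [← habs, hIR]; ring
  have := this
  linarith [this]

lemma J2val {κ t : ℝ} (hκ : 0 < κ) (ht : 0 < t) :
    ∫ r in Ioi (0 : ℝ), Real.exp (-r ^ 2 / (2 * t)) * r ^ 3 * Real.sinh (κ * r)
      = Real.sqrt (2 * π * t) * (κ ^ 3 * t ^ 3 + 3 * κ * t ^ 2)
          * Real.exp (κ ^ 2 * t / 2) / 2 := by
  have hb : (0 : ℝ) < (2 * t)⁻¹ := by positivity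
  set F : ℝ → ℝ := fun x => Real.exp (-x ^ 2 / (2 * t)) * x ^ 3 * Real.sinh (κ * x) with hF
  have hneg : ∀ x : ℝ, F (-x) = F x := by
    intro x
    simp only [hF, mul_neg, Real.sinh_neg, neg_sq]
    ring
  have heven : ∀ x : ℝ, F |x| = F x := by
    intro x
    rcases le_or_gt 0 x with h | h
    · rw [abs_of_nonneg h]
    · rw [abs_of_neg h, hneg]
  have habs := integral_comp_abs (f := F)
  have hL : (∫ x : ℝ, F |x|) = ∫ x : ℝ, F x := by
    congr 1; funext x; exact heven x
  rw [hL] at habs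
  have hFx : ∀ x : ℝ, F x = (1 / 2) * (x ^ 3 * Real.exp (-(2 * t)⁻¹ * x ^ 2 + κ * x))
      - (1 / 2) * (x ^ 3 * Real.exp (-(2 * t)⁻¹ * x ^ 2 + (-κ) * x)) := by
    intro x
    have e1 : Real.exp (-(2 * t)⁻¹ * x ^ 2 + κ * x)
        = Real.exp (-x ^ 2 / (2 * t)) * Real.exp (κ * x) := by
      rw [← Real.exp_add]; congr 1; ring
    have e2 : Real.exp (-(2 * t)⁻¹ * x ^ 2 + (-κ) * x)
        = Real.exp (-x ^ 2 / (2 * t)) * Real.exp (-(κ * x)) := by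
      rw [← Real.exp_add]; congr 1; ring
    rw [e1, e2, hF]
    simp only [Real.sinh_eq]
    ring
  have i1 := integrable_pow_quad hb κ 3
  have i2 := integrable_pow_quad hb (-κ) 3
  have hIR : (∫ x : ℝ, F x)
      = (1 / 2) * (∫ x : ℝ, x ^ 3 * Real.exp (-(2 * t)⁻¹ * x ^ 2 + κ * x))
        - (1 / 2) * (∫ x : ℝ, x ^ 3 * Real.exp (-(2 * t)⁻¹ * x ^ 2 + (-κ) * x)) := by
    rw [show F = fun x : ℝ => (1 / 2) * (x ^ 3 * Real.exp (-(2 * t)⁻¹ * x ^ 2 + κ * x))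
      - (1 / 2) * (x ^ 3 * Real.exp (-(2 * t)⁻¹ * x ^ 2 + (-κ) * x)) from funext hFx]
    rw [integral_sub (i1.const_mul _) (i2.const_mul _), integral_const_mul, integral_const_mul]
  have hq1 := pow3_quad hb κ
  have hq2 := pow3_quad hb (-κ)
  have hsq : Real.sqrt (π / (2 * t)⁻¹) = Real.sqrt (2 * π * t) := by
    congr 1; field_simp
  have hc1 : κ ^ 2 / (4 * (2 * t)⁻¹) = κ ^ 2 * t / 2 := by field_simp; ring
  have hc2 : (-κ) ^ 2 / (4 * (2 * t)⁻¹) = κ ^ 2 * t / 2 := by field_simp; ring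
  have hμ : κ / (2 * (2 * t)⁻¹) = κ * t := by field_simp
  have hμ' : (-κ) / (2 * (2 * t)⁻¹) = -(κ * t) := by field_simp
  have hd : (2 * (2 * t)⁻¹) = t⁻¹ := by field_simp
  rw [hq1, hq2, hsq, hc1, hc2, hμ, hμ', hd] at hIR
  have h2 : (2 : ℝ) * ∫ x in Ioi (0 : ℝ), F x
      = Real.sqrt (2 * π * t) * (κ ^ 3 * t ^ 3 + 3 * κ * t ^ 2) * Real.exp (κ ^ 2 * t / 2) := by
    rw [← habs, hIR]
    field_simp
    ring
  linarith [h2]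

lemma sinh_le_exp' {y : ℝ} : Real.sinh y ≤ Real.exp y := by
  rw [Real.sinh_eq]
  nlinarith [Real.exp_pos (-y), Real.exp_pos y]

lemma sinh_le_mul_exp {y : ℝ} (hy : 0 ≤ y) : Real.sinh y ≤ y * Real.exp y := by
  rw [Real.sinh_eq]
  have h1 : Real.exp (-y) * Real.exp y = 1 := by rw [← Real.exp_add]; simp
  have h2 : (-2 * y) + 1 ≤ Real.exp (-2 * y) := Real.add_one_le_exp _
  have h3 : Real.exp (-2 * y) = Real.exp (-y) * Real.exp (-y) := by
    rw [← Real.exp_add]; congr 1; ring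
  nlinarith [Real.exp_pos (-y), Real.exp_pos y]

lemma log_ratio_nonneg {y : ℝ} (hy : 0 < y) : 0 ≤ Real.log (Real.sinh y / y) :=
  Real.log_nonneg ((one_le_div hy).mpr (Real.self_lt_sinh_iff.mpr hy).le)

lemma log_ratio_le {y : ℝ} (hy : 0 < y) : Real.log (Real.sinh y / y) ≤ y := by
  have h1 : Real.sinh y / y ≤ Real.exp y := by
    rw [div_le_iff₀ hy]
    calc Real.sinh y ≤ y * Real.exp y := sinh_le_mul_exp hy.le
    _ = Real.exp y * y := by ring
  calc Real.log (Real.sinh y / y) ≤ Real.log (Real.exp y) :=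
        Real.log_le_log (div_pos (Real.sinh_pos_iff.mpr hy) hy) h1
  _ = y := Real.log_exp y

lemma self_le_exp {x : ℝ} : x ≤ Real.exp x := by
  have := Real.add_one_le_exp x; linarith

lemma exp_quad_integrableOn {b : ℝ} (hb : 0 < b) (a : ℝ) :
    IntegrableOn (fun x : ℝ => Real.exp (-b * x ^ 2 + a * x)) (Ioi 0) := by
  have h := integrable_pow_quad hb a 0
  simp only [pow_zero, one_mul] at h
  exact h.integrableOn

lemma exp_split3 {b a x : ℝ} (h : a = a) : Real.exp (-b * x ^ 2 + a * x) = Real.exp (-b * x ^ 2 + a * x) := rfl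

section intOn
variable {κ t : ℝ}

lemma iOn_g1 (hκ : 0 < κ) (ht : 0 < t) : IntegrableOn
    (fun r : ℝ => Real.exp (-r ^ 2 / (2 * t)) * r * Real.sinh (κ * r)) (Ioi 0) := by
  have hb : (0 : ℝ) < (2 * t)⁻¹ := by positivity
  apply Integrable.mono' (exp_quad_integrableOn hb (1 + κ))
  · exact ((Real.continuous_exp.comp (by continuity)).mul continuous_id |>.mul
      (Real.continuous_sinh.comp (by continuity))).aestronglyMeasurable.restrict
  · filter_upwards [ae_restrict_mem measurableSet_Ioi] with x hx
    have hx0 : (0 : ℝ) < x := hx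
    have hkx : (0 : ℝ) < κ * x := mul_pos hκ hx0
    have hs : (0 : ℝ) ≤ Real.sinh (κ * x) := (Real.sinh_pos_iff.mpr hkx).le
    rw [Real.norm_eq_abs, abs_of_nonneg
      (mul_nonneg (mul_nonneg (Real.exp_pos _).le hx0.le) hs)]
    have hrhs : Real.exp (-(2 * t)⁻¹ * x ^ 2 + (1 + κ) * x)
        = Real.exp (-x ^ 2 / (2 * t)) * Real.exp x * Real.exp (κ * x) := by
      rw [← Real.exp_add, ← Real.exp_add]; congr 1; field_simp; ring
    rw [hrhs]
    apply mul_le_mul _ sinh_le_exp' hs (by positivity)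
    exact mul_le_mul_of_nonneg_left self_le_exp (Real.exp_pos _).le

lemma iOn_g2 (hκ : 0 < κ) (ht : 0 < t) : IntegrableOn
    (fun r : ℝ => Real.exp (-r ^ 2 / (2 * t)) * r ^ 3 * Real.sinh (κ * r)) (Ioi 0) := by
  have hb : (0 : ℝ) < (2 * t)⁻¹ := by positivity
  apply Integrable.mono' (exp_quad_integrableOn hb (3 + κ))
  · exact ((Real.continuous_exp.comp (by continuity)).mul (continuous_pow 3) |>.mul
      (Real.continuous_sinh.comp (by continuity))).aestronglyMeasurable.restrict
  · filter_upwards [ae_restrict_mem measurableSet_Ioi] with x hx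
    have hx0 : (0 : ℝ) < x := hx
    have hkx : (0 : ℝ) < κ * x := mul_pos hκ hx0
    have hs : (0 : ℝ) ≤ Real.sinh (κ * x) := (Real.sinh_pos_iff.mpr hkx).le
    rw [Real.norm_eq_abs, abs_of_nonneg
      (mul_nonneg (mul_nonneg (Real.exp_pos _).le (by positivity)) hs)]
    have hrhs : Real.exp (-(2 * t)⁻¹ * x ^ 2 + (3 + κ) * x)
        = Real.exp (-x ^ 2 / (2 * t)) * (Real.exp x) ^ 3 * Real.exp (κ * x) := by
      rw [← Real.exp_nat_mul, ← Real.exp_add, ← Real.exp_add]; congr 1; field_simp; ring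
    rw [hrhs]
    apply mul_le_mul _ sinh_le_exp' hs (by positivity)
    exact mul_le_mul_of_nonneg_left (pow_le_pow_left₀ hx0.le self_le_exp 3) (Real.exp_pos _).le

lemma iOn_g3 (hκ : 0 < κ) (ht : 0 < t) : IntegrableOn
    (fun r : ℝ => Real.exp (-r ^ 2 / (2 * t)) * r * Real.sinh (κ * r)
      * Real.log (Real.sinh (κ * r) / (κ * r))) (Ioi 0) := by
  have hb : (0 : ℝ) < (2 * t)⁻¹ := by positivity
  apply Integrable.mono' ((exp_quad_integrableOn hb (2 + κ + κ)).const_mul κ)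
  · apply ContinuousOn.aestronglyMeasurable _ measurableSet_Ioi
    apply ContinuousOn.mul
    · exact ((Real.continuous_exp.comp (by continuity)).mul continuous_id |>.mul
        (Real.continuous_sinh.comp (by continuity))).continuousOn
    · apply ContinuousOn.log
      · exact (Real.continuous_sinh.comp (by continuity)).continuousOn.div
          (continuous_const.mul continuous_id).continuousOn
          (fun x hx => ne_of_gt (mul_pos hκ hx))
      · intro x hx
        exact ne_of_gt (div_pos (Real.sinh_pos_iff.mpr (mul_pos hκ hx)) (mul_pos hκ hx))
  · filter_upwards [ae_restrict_mem measurableSet_Ioi] with x hx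
    have hx0 : (0 : ℝ) < x := hx
    have hkx : (0 : ℝ) < κ * x := mul_pos hκ hx0
    have hs : (0 : ℝ) ≤ Real.sinh (κ * x) := (Real.sinh_pos_iff.mpr hkx).le
    have hlog0 := log_ratio_nonneg hkx
    have hlog1 := log_ratio_le hkx
    rw [Real.norm_eq_abs, abs_of_nonneg (mul_nonneg
      (mul_nonneg (mul_nonneg (Real.exp_pos _).le hx0.le) hs) hlog0)]
    have hrhs : κ * Real.exp (-(2 * t)⁻¹ * x ^ 2 + (2 + κ + κ) * x)
        = Real.exp (-x ^ 2 / (2 * t)) * Real.exp x * Real.exp (κ * x)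
            * (κ * (Real.exp x * Real.exp (κ * x))) := by
      have : Real.exp (-(2 * t)⁻¹ * x ^ 2 + (2 + κ + κ) * x)
          = Real.exp (-x ^ 2 / (2 * t)) * Real.exp x * Real.exp (κ * x)
              * (Real.exp x * Real.exp (κ * x)) := by
        rw [← Real.exp_add, ← Real.exp_add, ← Real.exp_add, ← Real.exp_add]
        congr 1; field_simp; ring
      rw [this]; ring
    rw [hrhs]
    have hg1 : Real.exp (-x ^ 2 / (2 * t)) * x * Real.sinh (κ * x)
        ≤ Real.exp (-x ^ 2 / (2 * t)) * Real.exp x * Real.exp (κ * x) := by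
      apply mul_le_mul _ sinh_le_exp' hs (by positivity)
      exact mul_le_mul_of_nonneg_left self_le_exp (Real.exp_pos _).le
    have hlogle : Real.log (Real.sinh (κ * x) / (κ * x))
        ≤ κ * (Real.exp x * Real.exp (κ * x)) := by
      calc Real.log (Real.sinh (κ * x) / (κ * x)) ≤ κ * x := hlog1
      _ ≤ κ * (Real.exp x * Real.exp (κ * x)) := by
          apply mul_le_mul_of_nonneg_left _ hκ.le
          calc x ≤ Real.exp x := self_le_exp
          _ = Real.exp x * 1 := (mul_one _).symm
          _ ≤ Real.exp x * Real.exp (κ * x) := by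
              apply mul_le_mul_of_nonneg_left _ (Real.exp_pos _).le
              exact Real.one_le_exp hkx.le
    exact mul_le_mul hg1 hlogle hlog0 (by positivity)

end intOn

/-- For `κ > 0` and `t > 0`, the entropy of the heat kernel of `ℍ³`
satisfies `E(t) = (3/2) log(2πt) + κ²t/2 + (κ²t+3)/2 + ξ(t) η(t)`. -/
theorem hyp_entropy_decomposition (κ : ℝ) (hκ : 0 < κ) (t : ℝ) (ht : 0 < t) :
    hypEntropy κ t =
      (3 / 2) * Real.log (2 * π * t) + κ ^ 2 * t / 2 + (κ ^ 2 * t + 3) / 2 +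
        xiFun κ t * etaFun κ t := by
  have h2πt : (0 : ℝ) < 2 * π * t := by positivity
  have hA : (0 : ℝ) < (2 * π * t) ^ (-(3 : ℝ) / 2) := Real.rpow_pos_of_pos h2πt _
  set A : ℝ := (2 * π * t) ^ (-(3 : ℝ) / 2) with hAdef
  set K : ℝ := A * Real.exp (-κ ^ 2 * t / 2) * κ with hK
  set c : ℝ := Real.log A - κ ^ 2 * t / 2 with hc
  -- pointwise identity
  have hpt : EqOn
      (fun r : ℝ => hypHeatKernel κ t r * Real.log (hypHeatKernel κ t r)
        * (Real.sinh (κ * r)) ^ 2)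
      (fun r : ℝ => K * (c * (Real.exp (-r ^ 2 / (2 * t)) * r * Real.sinh (κ * r))
        - (2 * t)⁻¹ * (Real.exp (-r ^ 2 / (2 * t)) * r ^ 3 * Real.sinh (κ * r))
        - Real.exp (-r ^ 2 / (2 * t)) * r * Real.sinh (κ * r)
            * Real.log (Real.sinh (κ * r) / (κ * r)))) (Ioi 0) := by
    intro r hr
    have hr0 : (0 : ℝ) < r := hr
    have hkr : (0 : ℝ) < κ * r := mul_pos hκ hr0
    have hS : (0 : ℝ) < Real.sinh (κ * r) := Real.sinh_pos_iff.mpr hkr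
    have hq : (0 : ℝ) < κ * r / Real.sinh (κ * r) := div_pos hkr hS
    simp only [hypHeatKernel]
    have hlog : Real.log (A * Real.exp (-r ^ 2 / (2 * t)) * (κ * r / Real.sinh (κ * r))
        * Real.exp (-κ ^ 2 * t / 2))
        = Real.log A + (-r ^ 2 / (2 * t))
          + (Real.log (κ * r) - Real.log (Real.sinh (κ * r))) + (-κ ^ 2 * t / 2) := by
      rw [Real.log_mul (mul_ne_zero (mul_ne_zero hA.ne' (Real.exp_ne_zero _)) hq.ne')
          (Real.exp_ne_zero _),
        Real.log_mul (mul_ne_zero hA.ne' (Real.exp_ne_zero _)) hq.ne',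
        Real.log_mul hA.ne' (Real.exp_ne_zero _),
        Real.log_exp, Real.log_exp, Real.log_div hkr.ne' hS.ne']
    rw [← hAdef, hlog, Real.log_div hS.ne' hkr.ne']
    rw [hK, hc]
    field_simp
    ring
  have hI : (∫ r in Ioi (0 : ℝ), hypHeatKernel κ t r * Real.log (hypHeatKernel κ t r)
      * (Real.sinh (κ * r)) ^ 2)
      = K * (c * (Real.sqrt (2 * π * t) * κ * t * Real.exp (κ ^ 2 * t / 2) / 2)
        - (2 * t)⁻¹ * (Real.sqrt (2 * π * t) * (κ ^ 3 * t ^ 3 + 3 * κ * t ^ 2)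
            * Real.exp (κ ^ 2 * t / 2) / 2)
        - etaFun κ t) := by
    rw [setIntegral_congr_fun measurableSet_Ioi hpt, integral_const_mul]
    have i1 := (iOn_g1 hκ ht).const_mul c
    have i2 := (iOn_g2 hκ ht).const_mul (2 * t)⁻¹
    have i3 := iOn_g3 hκ ht
    have i12 : Integrable (fun r : ℝ =>
        c * (Real.exp (-r ^ 2 / (2 * t)) * r * Real.sinh (κ * r))
          - (2 * t)⁻¹ * (Real.exp (-r ^ 2 / (2 * t)) * r ^ 3 * Real.sinh (κ * r)))
        (volume.restrict (Ioi 0)) := i1.sub i2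
    rw [integral_sub i12 i3, integral_sub i1 i2, integral_const_mul, integral_const_mul,
      J1val hκ ht, J2val hκ ht]
    rfl
  rw [hypEntropy, hI]
  -- algebraic facts
  have hee : Real.exp (-κ ^ 2 * t / 2) * Real.exp (κ ^ 2 * t / 2) = 1 := by
    rw [← Real.exp_add, show -κ ^ 2 * t / 2 + κ ^ 2 * t / 2 = 0 by ring, Real.exp_zero]
  have hAs : A * Real.sqrt (2 * π * t) = (2 * π * t)⁻¹ := by
    rw [hAdef, Real.sqrt_eq_rpow, ← Real.rpow_add h2πt,
      show (-(3 : ℝ) / 2 + 1 / 2) = (-1 : ℝ) by norm_num, Real.rpow_neg_one]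
  have h1 : (4 * π / κ ^ 2) * K * (Real.sqrt (2 * π * t) * κ * t
      * Real.exp (κ ^ 2 * t / 2) / 2) = 1 := by
    have : (4 * π / κ ^ 2) * K * (Real.sqrt (2 * π * t) * κ * t
        * Real.exp (κ ^ 2 * t / 2) / 2)
        = (4 * π / κ ^ 2) * κ * κ * t / 2 * (A * Real.sqrt (2 * π * t))
            * (Real.exp (-κ ^ 2 * t / 2) * Real.exp (κ ^ 2 * t / 2)) := by
      rw [hK]; ring
    rw [this, hAs, hee]
    field_simp
    ring
  have h2 : (4 * π / κ ^ 2) * K * ((2 * t)⁻¹ * (Real.sqrt (2 * π * t)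
      * (κ ^ 3 * t ^ 3 + 3 * κ * t ^ 2) * Real.exp (κ ^ 2 * t / 2) / 2))
      = (κ ^ 2 * t + 3) / 2 := by
    have : (4 * π / κ ^ 2) * K * ((2 * t)⁻¹ * (Real.sqrt (2 * π * t)
        * (κ ^ 3 * t ^ 3 + 3 * κ * t ^ 2) * Real.exp (κ ^ 2 * t / 2) / 2))
        = (4 * π / κ ^ 2) * κ * (κ ^ 3 * t ^ 3 + 3 * κ * t ^ 2) * (2 * t)⁻¹ / 2
            * (A * Real.sqrt (2 * π * t))
            * (Real.exp (-κ ^ 2 * t / 2) * Real.exp (κ ^ 2 * t / 2)) := by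
      rw [hK]; ring
    rw [this, hAs, hee]
    field_simp
    ring
  have hprod : Real.sqrt (2 / π) * Real.sqrt (2 * π) = 2 := by
    rw [← Real.sqrt_mul (by positivity), show (2 / π) * (2 * π) = 4 by field_simp; ring,
      show (4 : ℝ) = 2 ^ 2 by norm_num]
    exact Real.sqrt_sq (by norm_num)
  have h2π : (0 : ℝ) < 2 * π := by positivity
  have hBs : (2 * π) ^ (-(3 : ℝ) / 2) * Real.sqrt (2 * π) = (2 * π)⁻¹ := by
    rw [Real.sqrt_eq_rpow, ← Real.rpow_add h2π,
      show (-(3 : ℝ) / 2 + 1 / 2) = (-1 : ℝ) by norm_num, Real.rpow_neg_one]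
  have hkey : 4 * π * (2 * π) ^ (-(3 : ℝ) / 2) = Real.sqrt (2 / π) := by
    have hs2 : (0 : ℝ) < Real.sqrt (2 * π) := Real.sqrt_pos.mpr h2π
    have : 4 * π * (2 * π) ^ (-(3 : ℝ) / 2) * Real.sqrt (2 * π)
        = Real.sqrt (2 / π) * Real.sqrt (2 * π) := by
      rw [show 4 * π * (2 * π) ^ (-(3 : ℝ) / 2) * Real.sqrt (2 * π)
        = 4 * π * ((2 * π) ^ (-(3 : ℝ) / 2) * Real.sqrt (2 * π)) by ring, hBs, hprod]
      field_simp
      ring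
    exact mul_right_cancel₀ hs2.ne' this
  have hmulrpow : A = (2 * π) ^ (-(3 : ℝ) / 2) * t ^ (-(3 : ℝ) / 2) := by
    rw [hAdef, Real.mul_rpow (by positivity) ht.le]
  have hξ : (4 * π / κ ^ 2) * K = xiFun κ t := by
    rw [hK, hmulrpow, xiFun, ← hkey]
    field_simp
  have hcval : c = -((3 : ℝ) / 2 * Real.log (2 * π * t)) - κ ^ 2 * t / 2 := by
    rw [hc, hAdef, Real.log_rpow h2πt]
    ring
  have expand : -(4 * π / κ ^ 2) * (K * (c * (Real.sqrt (2 * π * t) * κ * t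
      * Real.exp (κ ^ 2 * t / 2) / 2)
      - (2 * t)⁻¹ * (Real.sqrt (2 * π * t) * (κ ^ 3 * t ^ 3 + 3 * κ * t ^ 2)
          * Real.exp (κ ^ 2 * t / 2) / 2)
      - etaFun κ t))
      = -(((4 * π / κ ^ 2) * K * (Real.sqrt (2 * π * t) * κ * t
          * Real.exp (κ ^ 2 * t / 2) / 2)) * c)
        + ((4 * π / κ ^ 2) * K * ((2 * t)⁻¹ * (Real.sqrt (2 * π * t)
            * (κ ^ 3 * t ^ 3 + 3 * κ * t ^ 2) * Real.exp (κ ^ 2 * t / 2) / 2)))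
        + ((4 * π / κ ^ 2) * K) * etaFun κ t := by
    ring
  rw [expand, h1, h2, hξ, hcval]
  ring
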